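/- Let T₁, T₂ be commuting matrices of the form Tᵢ = [[1,0,aᵢ],[0,1,bᵢ],[0,0,1]] in SL(3,ℤ), acting on (ℤ/nℤ)³ by reduction mod n. Suppose that for every n ≥ 2 the common fixed vectors of T₁ᵗ and T₂ᵗ acting on (ℤ/nℤ)³ form a cyclic group of order n. Then a₁b₂ - a₂b₁ = ±1. -/

import Mathlib

lemma fixed_iff (n : ℕ) (a b : ℤ) (v : Fin 3 → ZMod n) :
    (Matrix.transpose ((!![1, 0, a; 0, 1, b; 0, 0, 1]).map (Int.cast : ℤ → ZMod n))).mulVec v = v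
      ↔ (a : ZMod n) * v 0 + (b : ZMod n) * v 1 = 0 := by
  simp [funext_iff, Fin.forall_fin_succ, Matrix.mulVec, dotProduct, Fin.sum_univ_three,
    Matrix.transpose, Matrix.map_apply, Matrix.vecHead, Matrix.vecTail]

/-- If `T₁, T₂` are the commuting unipotent matrices `[[1,0,aᵢ],[0,1,bᵢ],[0,0,1]]` and for
every `n ≥ 2` the common fixed vectors of `T₁ᵗ, T₂ᵗ` on `(ℤ/nℤ)³` form a (cyclic) group
with exactly `n` elements, then `a₁b₂ - a₂b₁ = ±1`. -/
theorem stmt8 (a₁ b₁ a₂ b₂ : ℤ)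
    (h : ∀ n : ℕ, 2 ≤ n →
      Nat.card {v : Fin 3 → ZMod n //
        (Matrix.transpose ((!![1, 0, a₁; 0, 1, b₁; 0, 0, 1]).map (Int.cast : ℤ → ZMod n))).mulVec v = v ∧
        (Matrix.transpose ((!![1, 0, a₂; 0, 1, b₂; 0, 0, 1]).map (Int.cast : ℤ → ZMod n))).mulVec v = v} = n) :
    a₁ * b₂ - a₂ * b₁ = 1 ∨ a₁ * b₂ - a₂ * b₁ = -1 := by
  by_contra hc
  push_neg at hc
  set d : ℤ := a₁ * b₂ - a₂ * b₁ with hd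
  -- find a prime p dividing d
  obtain ⟨p, hp, hpd⟩ : ∃ p : ℕ, p.Prime ∧ (p : ℤ) ∣ d := by
    rcases eq_or_ne d 0 with h0 | h0
    · exact ⟨2, Nat.prime_two, h0 ▸ dvd_zero 2⟩
    · refine ⟨d.natAbs.minFac, Nat.minFac_prime ?_, ?_⟩
      · intro h1
        rcases Int.natAbs_eq_iff.mp h1 with h2 | h2 <;> simp_all
      · exact dvd_trans (Int.natCast_dvd_natCast.mpr (Nat.minFac_dvd d.natAbs))
          (Int.natAbs_dvd.mpr dvd_rfl)
  haveI : Fact p.Prime := ⟨hp⟩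
  have hp2 : 2 ≤ p := hp.two_le
  -- the determinant of the 2×2 matrix vanishes mod p
  have hdet : (!![(a₁ : ZMod p), b₁; a₂, b₂]).det = 0 := by
    have : ((d : ℤ) : ZMod p) = 0 := by
      exact_mod_cast (ZMod.intCast_zmod_eq_zero_iff_dvd d p).mpr hpd
    simp [Matrix.det_fin_two_of, hd] at this ⊢
    linear_combination this
  obtain ⟨w, hw0, hw⟩ := Matrix.exists_mulVec_eq_zero_iff.mpr hdet
  have hw1 : (a₁ : ZMod p) * w 0 + (b₁ : ZMod p) * w 1 = 0 := by
    have := congrFun hw 0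
    simpa [Matrix.mulVec, dotProduct, Fin.sum_univ_two, Matrix.vecHead, Matrix.vecTail] using this
  have hw2 : (a₂ : ZMod p) * w 0 + (b₂ : ZMod p) * w 1 = 0 := by
    have := congrFun hw 1
    simpa [Matrix.mulVec, dotProduct, Fin.sum_univ_two, Matrix.vecHead, Matrix.vecTail] using this
  -- build an injection from Option (ZMod p) into the fixed set
  set S := {v : Fin 3 → ZMod p //
      (Matrix.transpose ((!![1, 0, a₁; 0, 1, b₁; 0, 0, 1]).map (Int.cast : ℤ → ZMod p))).mulVec v = v ∧
      (Matrix.transpose ((!![1, 0, a₂; 0, 1, b₂; 0, 0, 1]).map (Int.cast : ℤ → ZMod p))).mulVec v = v} with hS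
  have mem0 : ∀ t : ZMod p, (![0, 0, t] : Fin 3 → ZMod p) ∈
      {v : Fin 3 → ZMod p |
        (Matrix.transpose ((!![1, 0, a₁; 0, 1, b₁; 0, 0, 1]).map (Int.cast : ℤ → ZMod p))).mulVec v = v ∧
        (Matrix.transpose ((!![1, 0, a₂; 0, 1, b₂; 0, 0, 1]).map (Int.cast : ℤ → ZMod p))).mulVec v = v} := by
    intro t
    constructor <;> rw [fixed_iff] <;> simp
  have memw : (![w 0, w 1, 0] : Fin 3 → ZMod p) ∈
      {v : Fin 3 → ZMod p |
        (Matrix.transpose ((!![1, 0, a₁; 0, 1, b₁; 0, 0, 1]).map (Int.cast : ℤ → ZMod p))).mulVec v = v ∧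
        (Matrix.transpose ((!![1, 0, a₂; 0, 1, b₂; 0, 0, 1]).map (Int.cast : ℤ → ZMod p))).mulVec v = v} := by
    constructor <;> rw [fixed_iff] <;> simpa using (by assumption)
  let f : Option (ZMod p) → S := fun o => match o with
    | none => ⟨![w 0, w 1, 0], memw⟩
    | some t => ⟨![0, 0, t], mem0 t⟩
  have hf : Function.Injective f := by
    intro o₁ o₂ he
    match o₁, o₂ with
    | none, none => rfl
    | some t, some t' =>
      have he := congrArg Subtype.val he
      have := congrFun he 2
      simp [f] at this
      rw [this]
    | none, some t =>
      exfalso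
      have he := congrArg Subtype.val he
      apply hw0
      funext i
      fin_cases i
      · simpa [f] using congrFun he 0
      · simpa [f] using congrFun he 1
    | some t, none =>
      exfalso
      have he := congrArg Subtype.val he
      apply hw0
      funext i
      fin_cases i
      · simpa [f] using (congrFun he 0).symm
      · simpa [f] using (congrFun he 1).symm
  have hcard := h p hp2
  have : Nat.card (Option (ZMod p)) ≤ Nat.card S := Nat.card_le_card_of_injective f hf
  rw [Nat.card_eq_fintype_card, Fintype.card_option, ZMod.card] at this
  rw [hcard] at this
  omega
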